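/- Assume k ≥ 2, r ≥ 2 and p = 1/2 (so q = 1/2), and set M = (r - 1)·(2^(k+1) - k - 2). Then f(M) = (r - 1)·((k + 3)/2^(k+1) - 1) and f(M - 1) = (r - 2)/2^k; in particular f(M) < 0 and f(M - 1) ≥ 0. -/

import Mathlib

/-- Values of `f` used in the proof of Theorem 2.3: for `k, r ≥ 2` and `p = 1/2`
(so `q = 1/2`), with `M = (r-1)·(2^(k+1) - k - 2)`, one has
`f(M) = (r-1)·((k+3)/2^(k+1) - 1) < 0` and `f(M-1) = (r-2)/2^k ≥ 0`. -/
theorem f_values_at_upper_bound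
    (k r : ℕ) (hk : 2 ≤ k) (hr : 2 ≤ r)
    (p q : ℝ) (hp : p = 1 / 2) (hq : q = 1 - p)
    (f : ℝ → ℝ)
    (hf : ∀ v : ℝ, f v =
      -(q * p ^ k) * v ^ 2 + (p ^ k * (q - (k * q + q + 1) * (r - 1)) + (r - 1)) * v +
        (r - 1) * ((r - 1) * (1 - p ^ k * (1 + k * q)) + p ^ k * (k + q) - (1 - p ^ k) / q))
    (M : ℝ) (hM : M = ((r : ℝ) - 1) * (2 ^ (k + 1) - k - 2)) :
    f M = ((r : ℝ) - 1) * (((k : ℝ) + 3) / 2 ^ (k + 1) - 1) ∧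
      f (M - 1) = ((r : ℝ) - 2) / 2 ^ k ∧
      f M < 0 ∧ 0 ≤ f (M - 1) := by
  have h1 : f M = ((r : ℝ) - 1) * (((k : ℝ) + 3) / 2 ^ (k + 1) - 1) := by
    rw [hf, hM, hp, hq, hp]
    rw [div_pow, one_pow]
    field_simp
    ring
  have h2' : f (M - 1) = ((r : ℝ) - 2) / 2 ^ k := by
    rw [hf, hM, hp, hq, hp]
    rw [div_pow, one_pow]
    field_simp
    ring
  refine ⟨h1, h2', ?_, ?_⟩
  · rw [h1]
    have hr1 : (1:ℝ) ≤ (r:ℝ) - 1 := by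
      have : (2:ℝ) ≤ r := by exact_mod_cast hr
      linarith
    have hknat : k + 3 < 2 ^ (k + 1) := by
      have hlt : k < 2 ^ k := Nat.lt_two_pow_self (n := k)
      have h4 : 4 ≤ 2 ^ k := by
        calc 4 = 2 ^ 2 := rfl
          _ ≤ 2 ^ k := Nat.pow_le_pow_right (by norm_num) hk
      have hs : 2 ^ (k + 1) = 2 * 2 ^ k := by ring
      omega
    have hk2 : (k:ℝ) + 3 < 2 ^ (k + 1) := by
      calc (k:ℝ) + 3 = ((k + 3 : ℕ) : ℝ) := by push_cast; ring
        _ < ((2 ^ (k+1) : ℕ) : ℝ) := by exact_mod_cast hknat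
        _ = 2 ^ (k+1) := by push_cast; ring
    have hpos : (0:ℝ) < 2 ^ (k+1) := by positivity
    have hlt1 : ((k : ℝ) + 3) / 2 ^ (k + 1) - 1 < 0 := by
      have := (div_lt_one hpos).mpr hk2
      linarith
    nlinarith
  · rw [h2']
    have : (2:ℝ) ≤ r := by exact_mod_cast hr
    apply div_nonneg
    · linarith
    · positivity
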